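/- Every well-rounded lattice of rank 2 in R^2 is stable: if L ⊂ R^2 has two linearly independent vectors of minimal nonzero length, then for every nonzero sublattice L' ⊆ L of rank k, det(L)^{1/2} ≤ det(L')^{1/k}. -/

import Mathlib

noncomputable section

/-- The planar lattice spanned over ℤ by `v1, v2` in Euclidean plane. -/
def lat (v1 v2 : EuclideanSpace ℝ (Fin 2)) : Set (EuclideanSpace ℝ (Fin 2)) :=
  {x | ∃ m n : ℤ, x = m • v1 + n • v2}

/-- The `i`-th successive minimum of a set `L` in the Euclidean plane. -/
noncomputable def succMin (L : Set (EuclideanSpace ℝ (Fin 2))) (i : ℕ) : ℝ :=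
  sInf {μ : ℝ | 0 ≤ μ ∧ i ≤ Module.finrank ℝ (Submodule.span ℝ {x ∈ L | ‖x‖ ≤ μ})}

namespace StableAux

open Module

local notation "E2" => EuclideanSpace ℝ (Fin 2)

lemma gram_det2 (f : Fin 2 → E2) :
    Matrix.det (Matrix.of fun i j : Fin 2 => (inner ℝ (f i) (f j) : ℝ)) =
      (f 0 0 * f 1 1 - f 0 1 * f 1 0)^2 := by
  simp [Matrix.det_fin_two, PiLp.inner_apply, RCLike.inner_apply, Fin.sum_univ_two]
  ring

lemma pair_d_ne {x y : E2} (h : LinearIndependent ℝ ![x, y]) :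
    x 0 * y 1 - x 1 * y 0 ≠ 0 := by
  intro hd
  rw [LinearIndependent.pair_iff] at h
  have h1 := h (y 1) (-(x 1)) (by
    ext i; fin_cases i <;> simp <;> nlinarith [hd])
  have h2 := h (y 0) (-(x 0)) (by
    ext i; fin_cases i <;> simp <;> nlinarith [hd])
  have hx : x = 0 := by
    ext i; fin_cases i
    · simpa using (neg_eq_zero.mp h2.2)
    · simpa using (neg_eq_zero.mp h1.2)
  have := h 1 0 (by rw [hx]; simp)
  exact one_ne_zero this.1

lemma lat_coord {v1 v2 x : E2} (hx : x ∈ lat v1 v2) :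
    ∃ m n : ℤ, x 0 = m * v1 0 + n * v2 0 ∧ x 1 = m * v1 1 + n * v2 1 := by
  obtain ⟨m, n, rfl⟩ := hx
  exact ⟨m, n, by simp, by simp⟩

lemma d_ge {v1 v2 x y : E2}
    (hx : x ∈ lat v1 v2) (hy : y ∈ lat v1 v2) (hxy : LinearIndependent ℝ ![x, y]) :
    |v1 0 * v2 1 - v1 1 * v2 0| ≤ |x 0 * y 1 - x 1 * y 0| := by
  obtain ⟨m, n, hx0, hx1⟩ := lat_coord hx
  obtain ⟨p, q, hy0, hy1⟩ := lat_coord hy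
  have key : x 0 * y 1 - x 1 * y 0
      = ((m*q - n*p : ℤ) : ℝ) * (v1 0 * v2 1 - v1 1 * v2 0) := by
    rw [hx0, hx1, hy0, hy1]; push_cast; ring
  have hdxy := pair_d_ne hxy
  have hc : (m*q - n*p : ℤ) ≠ 0 := by
    intro h; rw [key, h] at hdxy; simp at hdxy
  have h1 : (1:ℝ) ≤ |((m*q - n*p : ℤ) : ℝ)| := by
    rw [← Int.cast_abs]; exact_mod_cast Int.one_le_abs hc
  calc |v1 0 * v2 1 - v1 1 * v2 0| = 1 * |v1 0 * v2 1 - v1 1 * v2 0| := by ring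
    _ ≤ |((m*q - n*p : ℤ) : ℝ)| * |v1 0 * v2 1 - v1 1 * v2 0| :=
        mul_le_mul_of_nonneg_right h1 (abs_nonneg _)
    _ = |x 0 * y 1 - x 1 * y 0| := by rw [key, abs_mul]

lemma norm_sq_coord (x : E2) : ‖x‖^2 = x 0^2 + x 1^2 := by
  rw [← real_inner_self_eq_norm_sq]
  simp only [PiLp.inner_apply, Fin.sum_univ_two, RCLike.inner_apply, conj_trivial]; ring

lemma d_le_norm (x y : E2) : |x 0 * y 1 - x 1 * y 0| ≤ ‖x‖ * ‖y‖ := by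
  have h : (x 0 * y 1 - x 1 * y 0)^2 ≤ (‖x‖ * ‖y‖)^2 := by
    rw [mul_pow, norm_sq_coord, norm_sq_coord]
    nlinarith [sq_nonneg (x 0 * y 0 + x 1 * y 1)]
  calc |x 0 * y 1 - x 1 * y 0| = Real.sqrt ((x 0 * y 1 - x 1 * y 0)^2) :=
        (Real.sqrt_sq_eq_abs _).symm
    _ ≤ Real.sqrt ((‖x‖ * ‖y‖)^2) := Real.sqrt_le_sqrt h
    _ = ‖x‖ * ‖y‖ := Real.sqrt_sq (by positivity)

lemma succMin_le_norm {L : Set E2} {x : E2} (hx : x ∈ L) (hx0 : x ≠ 0) :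
    succMin L 1 ≤ ‖x‖ := by
  apply csInf_le ⟨0, fun μ hμ => hμ.1⟩
  refine ⟨norm_nonneg x, ?_⟩
  have hsub : ({x} : Set E2) ⊆ {z ∈ L | ‖z‖ ≤ ‖x‖} := by
    simp [Set.singleton_subset_iff, hx]
  calc 1 = finrank ℝ (Submodule.span ℝ ({x} : Set E2)) :=
        (finrank_span_singleton hx0).symm
    _ ≤ _ := Submodule.finrank_mono (Submodule.span_mono hsub)

lemma exists_pair_of_finrank (s : Set E2)
    (h2 : 2 ≤ finrank ℝ (Submodule.span ℝ s)) :
    ∃ x ∈ s, ∃ y ∈ s, LinearIndependent ℝ ![x, y] := by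
  obtain ⟨b, hbs, hspan, hbind⟩ := exists_linearIndependent ℝ s
  have hnt : b.Nontrivial := by
    by_contra hns
    rw [Set.not_nontrivial_iff] at hns
    rcases hns.eq_empty_or_singleton with h | ⟨a, h⟩
    · rw [← hspan, h, Submodule.span_empty] at h2
      rw [finrank_bot] at h2; omega
    · rw [← hspan, h] at h2
      have := finrank_span_le_card (R := ℝ) ({a} : Set E2)
      simp at this; omega
  obtain ⟨x, hxb, y, hyb, hne⟩ := hnt
  refine ⟨x, hbs hxb, y, hbs hyb, ?_⟩
  have hmap : Function.Injective (fun i : Fin 2 => (![⟨x, hxb⟩, ⟨y, hyb⟩] i : b)) := by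
    intro i j hij
    fin_cases i <;> fin_cases j <;> simp_all
  have := hbind.comp _ hmap
  convert this using 1
  funext i; fin_cases i <;> rfl
  rfl

lemma sqrt_d_le_succMin2 {v1 v2 : E2} (hind : LinearIndependent ℝ ![v1, v2]) :
    Real.sqrt |v1 0 * v2 1 - v1 1 * v2 0| ≤ succMin (lat v1 v2) 2 := by
  apply le_csInf
  · refine ⟨max ‖v1‖ ‖v2‖, le_trans (norm_nonneg v1) (le_max_left _ _), ?_⟩
    have hsub : ({v1, v2} : Set E2) ⊆ {z ∈ lat v1 v2 | ‖z‖ ≤ max ‖v1‖ ‖v2‖} := by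
      rintro z (rfl | rfl)
      · exact ⟨⟨1, 0, by simp⟩, le_max_left _ _⟩
      · exact ⟨⟨0, 1, by simp⟩, le_max_right _ _⟩
    have h2 : finrank ℝ (Submodule.span ℝ ({v1, v2} : Set E2)) = 2 := by
      have h := finrank_span_eq_card hind
      have hr : Set.range ![v1, v2] = ({v1, v2} : Set E2) := by
        ext z; simp [Fin.exists_fin_two, or_comm]
      rw [hr] at h
      simpa using h
    calc (2:ℕ) = _ := h2.symm
      _ ≤ _ := Submodule.finrank_mono (Submodule.span_mono hsub)
  · rintro μ ⟨hμ0, hμ2⟩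
    obtain ⟨x, hxs, y, hys, hxy⟩ := exists_pair_of_finrank _ hμ2
    have hd : |v1 0 * v2 1 - v1 1 * v2 0| ≤ μ^2 := by
      calc |v1 0 * v2 1 - v1 1 * v2 0| ≤ |x 0 * y 1 - x 1 * y 0| :=
            d_ge hxs.1 hys.1 hxy
        _ ≤ ‖x‖ * ‖y‖ := d_le_norm x y
        _ ≤ μ * μ := mul_le_mul hxs.2 hys.2 (norm_nonneg _) hμ0
        _ = μ^2 := (sq μ).symm
    calc Real.sqrt |v1 0 * v2 1 - v1 1 * v2 0| ≤ Real.sqrt (μ^2) :=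
          Real.sqrt_le_sqrt hd
      _ = μ := Real.sqrt_sq hμ0

end StableAux

open StableAux Module in
theorem stmt_2 (v1 v2 : EuclideanSpace ℝ (Fin 2))
    (hind : LinearIndependent ℝ ![v1, v2])
    (hWR : succMin (lat v1 v2) 1 = succMin (lat v1 v2) 2)
    (k : ℕ) (hk : 1 ≤ k) (w : Fin k → EuclideanSpace ℝ (Fin 2))
    (hw : ∀ i, w i ∈ lat v1 v2) (hwind : LinearIndependent ℝ w) :
    (Real.sqrt (Matrix.det (Matrix.of fun i j : Fin 2 =>
        (inner ℝ (![v1, v2] i) (![v1, v2] j) : ℝ)))) ^ ((1 : ℝ) / 2) ≤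
      (Real.sqrt (Matrix.det (Matrix.of fun i j : Fin k =>
        (inner ℝ (w i) (w j) : ℝ)))) ^ ((1 : ℝ) / k) := by
  have hk2 : k ≤ 2 := by
    have := hwind.fintype_card_le_finrank
    simpa using this
  have hgv : Real.sqrt (Matrix.det (Matrix.of fun i j : Fin 2 =>
      (inner ℝ (![v1, v2] i) (![v1, v2] j) : ℝ))) = |v1 0 * v2 1 - v1 1 * v2 0| := by
    have h := gram_det2 ![v1, v2]
    simp only [Matrix.cons_val_zero, Matrix.cons_val_one, Matrix.head_cons] at h
    rw [h, Real.sqrt_sq_eq_abs]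
  rw [hgv]
  interval_cases k
  · -- k = 1
    have h1 : Matrix.det (Matrix.of fun i j : Fin 1 => (inner ℝ (w i) (w j) : ℝ))
        = ‖w 0‖^2 := by
      simp only [Matrix.det_fin_one, Matrix.of_apply]
      exact real_inner_self_eq_norm_sq (w 0)
    rw [h1, Real.sqrt_sq (norm_nonneg _)]
    rw [show ((1:ℝ)/((1:ℕ):ℝ)) = 1 by norm_num, Real.rpow_one, ← Real.sqrt_eq_rpow]
    calc Real.sqrt |v1 0 * v2 1 - v1 1 * v2 0| ≤ succMin (lat v1 v2) 2 :=
          sqrt_d_le_succMin2 hind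
      _ = succMin (lat v1 v2) 1 := hWR.symm
      _ ≤ ‖w 0‖ := succMin_le_norm (hw 0) (hwind.ne_zero 0)
  · -- k = 2
    have hgw : Real.sqrt (Matrix.det (Matrix.of fun i j : Fin 2 =>
        (inner ℝ (w i) (w j) : ℝ))) = |w 0 0 * w 1 1 - w 0 1 * w 1 0| := by
      rw [gram_det2 w, Real.sqrt_sq_eq_abs]
    rw [hgw, show ((1:ℝ)/((2:ℕ):ℝ)) = 1/2 by norm_num]
    have hw2 : LinearIndependent ℝ ![w 0, w 1] := by
      convert hwind using 1
      funext i; fin_cases i <;> rfl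
    exact Real.rpow_le_rpow (abs_nonneg _) (d_ge (hw 0) (hw 1) hw2) (by norm_num)
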